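/- Define Ξ(μ) as the measure with distribution function Ξ(μ)([0,t]) = 1 + ψ_μ(-1/t). Then Ξ(μ ⊎ ν) = Ξ(μ) ∪∨ Ξ(ν) for all probability measures μ, ν on [0,∞), where ⊎ is boolean additive convolution (η_{μ⊎ν} = η_μ + η_ν) and ∪∨ is boolean max-convolution. Equivalently: 1/Ξ(μ⊎ν)([0,t]) = 1/Ξ(μ)([0,t]) + 1/Ξ(ν)([0,t]) − 1, i.e., 1/Ξ(μ)([0,t]) = 1 − η_μ(−1/t). -/

import Mathlib

open MeasureTheory Set Filter Real

lemma xi_aux_pos (μ : Measure ℝ) [IsProbabilityMeasure μ]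
    (hμ : μ (Set.Iio 0) = 0) (s : ℝ) (hs : s < 0) :
    0 < 1 + ∫ u, s * u / (1 - s * u) ∂μ := by
  have hae : ∀ᵐ u ∂μ, 0 ≤ u := by
    rw [ae_iff]
    simpa [Set.Iio, not_le] using hμ
  have hmeas : Measurable fun u : ℝ => s * u / (1 - s * u) :=
    (measurable_const.mul measurable_id).div
      (measurable_const.sub (measurable_const.mul measurable_id))
  -- pointwise facts for u ≥ 0
  have hden : ∀ u : ℝ, 0 ≤ u → (1 : ℝ) ≤ 1 - s * u := by
    intro u hu; nlinarith
  have hint : Integrable (fun u : ℝ => s * u / (1 - s * u)) μ := by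
    refine Integrable.mono' (integrable_const (1 : ℝ)) hmeas.aestronglyMeasurable ?_
    filter_upwards [hae] with u hu
    have h1 : (1 : ℝ) ≤ 1 - s * u := hden u hu
    have h0 : (0 : ℝ) < 1 - s * u := by linarith
    rw [Real.norm_eq_abs, abs_div, abs_of_pos h0]
    rw [div_le_one h0]
    have : |s * u| = -(s * u) := abs_of_nonpos (by nlinarith)
    rw [this]; linarith
  have key : 0 < ∫ u, (s * u / (1 - s * u) + 1) ∂μ := by
    have hint2 : Integrable (fun u : ℝ => s * u / (1 - s * u) + 1) μ :=
      hint.add (integrable_const 1)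
    have hnn : 0 ≤ᵐ[μ] fun u : ℝ => s * u / (1 - s * u) + 1 := by
      filter_upwards [hae] with u hu
      have h0 : (0 : ℝ) < 1 - s * u := by have := hden u hu; linarith
      have : s * u / (1 - s * u) + 1 = 1 / (1 - s * u) := by field_simp; ring
      rw [this]; positivity
    rw [integral_pos_iff_support_of_nonneg_ae hnn hint2]
    have hsub : ∀ᵐ u ∂μ, u ∈ Function.support fun u : ℝ => s * u / (1 - s * u) + 1 := by
      filter_upwards [hae] with u hu
      have h0 : (0 : ℝ) < 1 - s * u := by have := hden u hu; linarith
      have heq : s * u / (1 - s * u) + 1 = 1 / (1 - s * u) := by field_simp; ring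
      simp only [Function.mem_support, heq]
      positivity
    have h1 : μ (Function.support fun u : ℝ => s * u / (1 - s * u) + 1)ᶜ = 0 := by
      rw [measure_eq_zero_iff_ae_notMem]
      filter_upwards [hsub] with u hu
      simpa using hu
    have h2 : (1 : ENNReal) = μ Set.univ := (measure_univ).symm
    have h3 : μ Set.univ ≤ μ (Function.support fun u : ℝ => s * u / (1 - s * u) + 1)
        + μ (Function.support fun u : ℝ => s * u / (1 - s * u) + 1)ᶜ := by
      rw [← Set.union_compl_self (Function.support fun u : ℝ => s * u / (1 - s * u) + 1)]
      exact measure_union_le _ _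
    rw [h1, add_zero] at h3
    calc (0 : ENNReal) < 1 := by norm_num
      _ = μ Set.univ := h2
      _ ≤ _ := h3
  have := integral_add hint (integrable_const (1 : ℝ))
  simp only [integral_const, measure_univ, probReal_univ, ENNReal.toReal_one, smul_eq_mul, one_mul] at this
  rw [this] at key
  linarith

/-- `Ξ` is a homomorphism from boolean additive convolution to boolean
max-convolution: if `η_ρ = η_μ + η_ν` (i.e. `ρ = μ ⊎ ν`), then
`1/Ξ(ρ)([0,t]) = 1/Ξ(μ)([0,t]) + 1/Ξ(ν)([0,t]) - 1` for all `t > 0`; the key identity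
being `1/Ξ(μ)([0,t]) = 1 - η_μ(-1/t)`. -/
theorem xi_boolean_hom (μ ν ρ : Measure ℝ)
    [IsProbabilityMeasure μ] [IsProbabilityMeasure ν] [IsProbabilityMeasure ρ]
    (hμ : μ (Set.Iio 0) = 0) (hν : ν (Set.Iio 0) = 0) (hρ : ρ (Set.Iio 0) = 0)
    (heta : ∀ s : ℝ, s < 0 →
      (∫ u, s * u / (1 - s * u) ∂ρ) / (1 + ∫ u, s * u / (1 - s * u) ∂ρ) =
        (∫ u, s * u / (1 - s * u) ∂μ) / (1 + ∫ u, s * u / (1 - s * u) ∂μ) +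
        (∫ u, s * u / (1 - s * u) ∂ν) / (1 + ∫ u, s * u / (1 - s * u) ∂ν)) :
    (∀ s : ℝ, s < 0 →
      1 / (1 + ∫ u, s * u / (1 - s * u) ∂μ) =
        1 - (∫ u, s * u / (1 - s * u) ∂μ) / (1 + ∫ u, s * u / (1 - s * u) ∂μ)) ∧
    (∀ t : ℝ, 0 < t →
      1 / (1 + ∫ u, (-1 / t) * u / (1 - (-1 / t) * u) ∂ρ) =
        1 / (1 + ∫ u, (-1 / t) * u / (1 - (-1 / t) * u) ∂μ) +
        1 / (1 + ∫ u, (-1 / t) * u / (1 - (-1 / t) * u) ∂ν) - 1) := by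
  constructor
  · intro s hs
    have h := xi_aux_pos μ hμ s hs
    field_simp
    ring
  · intro t ht
    have hst : (-1 / t : ℝ) < 0 := div_neg_of_neg_of_pos (by norm_num) ht
    have hμ' := xi_aux_pos μ hμ _ hst
    have hν' := xi_aux_pos ν hν _ hst
    have hρ' := xi_aux_pos ρ hρ _ hst
    have h := heta _ hst
    set a := ∫ u, (-1 / t) * u / (1 - (-1 / t) * u) ∂ρ with ha
    set b := ∫ u, (-1 / t) * u / (1 - (-1 / t) * u) ∂μ with hb
    set c := ∫ u, (-1 / t) * u / (1 - (-1 / t) * u) ∂ν with hc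
    field_simp at h ⊢
    nlinarith [h]
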